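/- (From the Euler–Lagrange equation to strong duality.) In the finite discrete setting, assume additionally that φ' is continuous. Suppose u ∈ E satisfies the discrete variational equation Σ_{t∈T} μ_t (φ'(|(G u)_t|)/|(G u)_t|) (G u)_t·(G w)_t = ℓ(w) for all w ∈ E, where a summand is taken to be 0 whenever (G u)_t = 0. Define σ : T → ℝ^d by σ_t := (φ'(|(G u)_t|)/|(G u)_t|) (G u)_t, with σ_t := 0 whenever (G u)_t = 0. Then σ satisfies the discrete divergence constraint, J(u) + J*(σ) = 0, u minimizes J over E, and σ minimizes J* over the set of all τ : T → ℝ^d satisfying the discrete divergence constraint. -/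

import Mathlib

open MeasureTheory

/-- The convex conjugate `φ*(r) = sup_{s ≥ 0} (r s − φ(s))`. -/
noncomputable def conj (φ : ℝ → ℝ) (r : ℝ) : ℝ :=
  ⨆ s : Set.Ici (0:ℝ), (r * (s : ℝ) - φ (s : ℝ))

/-- The right-continuous inverse `(φ')⁻¹(t) = sup {r ≥ 0 : φ' r ≤ t}`. -/
noncomputable def rcInv (φ' : ℝ → ℝ) (t : ℝ) : ℝ :=
  sSup {r : ℝ | 0 ≤ r ∧ φ' r ≤ t}

/-- An N-function `φ : [0,∞) → [0,∞)` with (right-continuous, non-decreasing)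
density `φ'`, modeled by functions on `ℝ` restricted to `[0,∞)`. -/
structure IsNFunction (φ φ' : ℝ → ℝ) : Prop where
  continuousOn : ContinuousOn φ (Set.Ici 0)
  convexOn : ConvexOn ℝ (Set.Ici 0) φ
  nonneg : ∀ t ∈ Set.Ici (0:ℝ), 0 ≤ φ t
  deriv_nonneg : ∀ t ∈ Set.Ici (0:ℝ), 0 ≤ φ' t
  deriv_mono : MonotoneOn φ' (Set.Ici 0)
  deriv_rightCont : ∀ t ∈ Set.Ici (0:ℝ), ContinuousWithinAt φ' (Set.Ici t) t
  eq_integral : ∀ t ∈ Set.Ici (0:ℝ), φ t = ∫ s in (0:ℝ)..t, φ' s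
  deriv_zero : φ' 0 = 0
  deriv_pos : ∀ t > (0:ℝ), 0 < φ' t
  deriv_tendsto : Filter.Tendsto φ' Filter.atTop Filter.atTop

open scoped Classical

section Aux

variable {φ φ' : ℝ → ℝ}

private lemma intble (hN : IsNFunction φ φ') {a b : ℝ} (ha : 0 ≤ a) (hb : 0 ≤ b) :
    IntervalIntegrable φ' volume a b := by
  apply MonotoneOn.intervalIntegrable
  apply hN.deriv_mono.mono
  intro x hx
  rcases Set.mem_uIcc.mp hx with h | h
  · exact le_trans ha h.1
  · exact le_trans hb h.1

private lemma phi_sub (hN : IsNFunction φ φ') {s a : ℝ} (hs : 0 ≤ s) (ha : 0 ≤ a) :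
    φ a - φ s = ∫ x in s..a, φ' x := by
  rw [hN.eq_integral a ha, hN.eq_integral s hs]
  exact intervalIntegral.integral_interval_sub_left (intble hN le_rfl ha) (intble hN le_rfl hs)

private lemma int_lb (hN : IsNFunction φ φ') {a b m : ℝ} (hb : 0 ≤ b) (hab : b ≤ a)
    (hm : ∀ t ∈ Set.Icc b a, m ≤ φ' t) :
    m * (a - b) ≤ ∫ x in b..a, φ' x := by
  have h := intervalIntegral.integral_mono_on hab (intervalIntegrable_const (c := m))
    (intble hN hb (hb.trans hab)) hm
  rw [intervalIntegral.integral_const] at h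
  calc m * (a - b) = (a - b) • m := by rw [smul_eq_mul]; ring
  _ ≤ _ := h

private lemma int_ub (hN : IsNFunction φ φ') {a b : ℝ} (hb : 0 ≤ b) (hab : b ≤ a) :
    (∫ x in b..a, φ' x) ≤ φ' a * (a - b) := by
  have h := intervalIntegral.integral_mono_on hab (intble hN hb (hb.trans hab))
    (intervalIntegrable_const (c := φ' a))
    (fun t ht => hN.deriv_mono (Set.mem_Ici.mpr (hb.trans ht.1))
      (Set.mem_Ici.mpr (hb.trans hab)) ht.2)
  rw [intervalIntegral.integral_const] at h
  calc (∫ x in b..a, φ' x) ≤ (a - b) • φ' a := h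
  _ = φ' a * (a - b) := by rw [smul_eq_mul]; ring

private lemma grad_ineq (hN : IsNFunction φ φ') {s a : ℝ} (hs : 0 ≤ s) (ha : 0 ≤ a) :
    φ' s * (a - s) ≤ φ a - φ s := by
  rw [phi_sub hN hs ha]
  rcases le_total s a with h | h
  · exact int_lb hN hs h
      (fun t ht => hN.deriv_mono (Set.mem_Ici.mpr hs) (Set.mem_Ici.mpr (hs.trans ht.1)) ht.1)
  · have h1 := int_ub hN ha h
    have h2 : (∫ x in s..a, φ' x) = -∫ x in a..s, φ' x := intervalIntegral.integral_symm a s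
    nlinarith [h1, h2]

private lemma conj_bdd (hN : IsNFunction φ φ') {r : ℝ} (hr : 0 ≤ r) :
    BddAbove (Set.range fun s : Set.Ici (0:ℝ) => r * (s:ℝ) - φ s) := by
  obtain ⟨s₁, hs₁⟩ := Filter.eventually_atTop.mp (Filter.tendsto_atTop.mp hN.deriv_tendsto (r + 1))
  set s₀ := max s₁ 0 with hs₀def
  have hs₀ : (0:ℝ) ≤ s₀ := le_max_right _ _
  refine ⟨(r + 1) * s₀, ?_⟩
  rintro x ⟨⟨s, hs⟩, rfl⟩
  have hs' : (0:ℝ) ≤ s := hs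
  simp only
  by_cases h : s ≤ s₀
  · have hφ := hN.nonneg s hs
    nlinarith [mul_nonneg hr (sub_nonneg.mpr h)]
  · push_neg at h
    have hint : (r + 1) * (s - s₀) ≤ ∫ x in s₀..s, φ' x :=
      int_lb hN hs₀ h.le (fun t ht => hs₁ t (le_trans (le_max_left _ _) ht.1))
    have hps : φ s - φ s₀ = ∫ x in s₀..s, φ' x := phi_sub hN hs₀ hs'
    have hφ0 := hN.nonneg s₀ (Set.mem_Ici.mpr hs₀)
    nlinarith

private lemma mem_conj_le (hN : IsNFunction φ φ') {r s : ℝ} (hr : 0 ≤ r) (hs : 0 ≤ s) :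
    r * s - φ s ≤ conj φ r :=
  le_ciSup (conj_bdd hN hr) (⟨s, hs⟩ : Set.Ici (0:ℝ))

private lemma phi_zero (hN : IsNFunction φ φ') : φ 0 = 0 := by
  simpa using hN.eq_integral 0 (Set.mem_Ici.mpr le_rfl)

private lemma conj_deriv (hN : IsNFunction φ φ') {s : ℝ} (hs : 0 ≤ s) :
    conj φ (φ' s) = φ' s * s - φ s := by
  haveI : Nonempty (Set.Ici (0:ℝ)) := ⟨⟨0, Set.mem_Ici.mpr le_rfl⟩⟩
  refine le_antisymm (ciSup_le ?_) (mem_conj_le hN (hN.deriv_nonneg s (Set.mem_Ici.mpr hs)) hs)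
  rintro ⟨a, ha⟩
  have h := grad_ineq hN hs (ha : (0:ℝ) ≤ a)
  simp only
  nlinarith [h]

end Aux

/-- from the discrete Euler–Lagrange equation to strong duality. If `u`
solves the discrete variational equation (with summands interpreted as `0` where
`(G u)_t = 0`), then `σ_t = (φ'(|(G u)_t|)/|(G u)_t|)(G u)_t` satisfies the discrete
divergence constraint, `J(u) + J*(σ) = 0`, `u` minimizes `J` over `E`, and `σ`
minimizes `J*` over the constraint set. -/
theorem euler_lagrange_strong_duality {d : ℕ} (hd : 1 ≤ d)
    {T : Type*} [Fintype T] [Nonempty T]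
    (μ : T → ℝ) (hμ : ∀ t, 0 < μ t)
    {E : Type*} [AddCommGroup E] [Module ℝ E] [FiniteDimensional ℝ E]
    (G : E →ₗ[ℝ] (T → EuclideanSpace ℝ (Fin d))) (hG : Function.Injective G)
    (ℓ : E →ₗ[ℝ] ℝ)
    (φ φ' : ℝ → ℝ) (hN : IsNFunction φ φ')
    (hcont : ContinuousOn φ' (Set.Ici 0))
    (J : E → ℝ) (hJ : ∀ v, J v = (∑ t, μ t * φ ‖G v t‖) - ℓ v)
    (Jstar : (T → EuclideanSpace ℝ (Fin d)) → ℝ)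
    (hJstar : ∀ τ, Jstar τ = ∑ t, μ t * conj φ ‖τ t‖)
    (u : E) (c : T → ℝ)
    (hc : ∀ t, c t = if G u t = 0 then 0 else φ' ‖G u t‖ / ‖G u t‖)
    (hEL : ∀ w : E, (∑ t, μ t * (c t * (inner ℝ (G u t) (G w t) : ℝ))) = ℓ w)
    (σ : T → EuclideanSpace ℝ (Fin d)) (hσ : ∀ t, σ t = c t • G u t) :
    (∀ w : E, (∑ t, μ t * (inner ℝ (σ t) (G w t) : ℝ)) = ℓ w) ∧
    J u + Jstar σ = 0 ∧
    (∀ v : E, J u ≤ J v) ∧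
    (∀ τ : T → EuclideanSpace ℝ (Fin d),
      (∀ w : E, (∑ t, μ t * (inner ℝ (τ t) (G w t) : ℝ)) = ℓ w) →
      Jstar σ ≤ Jstar τ) := by
  have hc0 : ∀ t, 0 ≤ c t := by
    intro t; rw [hc t]
    split
    · exact le_rfl
    · exact div_nonneg (hN.deriv_nonneg _ (Set.mem_Ici.mpr (norm_nonneg _))) (norm_nonneg _)
  have hσnorm : ∀ t, ‖σ t‖ = φ' ‖G u t‖ := by
    intro t
    rw [hσ t, norm_smul, Real.norm_eq_abs, abs_of_nonneg (hc0 t), hc t]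
    by_cases h : G u t = 0
    · simp [h, hN.deriv_zero]
    · rw [if_neg h]
      have hne : ‖G u t‖ ≠ 0 := norm_ne_zero_iff.mpr h
      field_simp
  have hσinner : ∀ t, c t * (inner ℝ (G u t) (G u t) : ℝ) = φ' ‖G u t‖ * ‖G u t‖ := by
    intro t
    rw [real_inner_self_eq_norm_mul_norm, hc t]
    by_cases h : G u t = 0
    · simp [h, hN.deriv_zero]
    · rw [if_neg h]
      have hne : ‖G u t‖ ≠ 0 := norm_ne_zero_iff.mpr h
      field_simp
  have hpart1 : ∀ w : E, (∑ t, μ t * (inner ℝ (σ t) (G w t) : ℝ)) = ℓ w := by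
    intro w
    rw [← hEL w]
    refine Finset.sum_congr rfl fun t _ => ?_
    rw [hσ t, real_inner_smul_left]
  have hlu : (ℓ u : ℝ) = ∑ t, μ t * (φ' ‖G u t‖ * ‖G u t‖) := by
    rw [← hEL u]
    exact Finset.sum_congr rfl fun t _ => by rw [hσinner t]
  have hpart2 : J u + Jstar σ = 0 := by
    have expand : J u + Jstar σ =
        ∑ t, (μ t * φ ‖G u t‖ + μ t * conj φ ‖σ t‖ - μ t * (φ' ‖G u t‖ * ‖G u t‖)) := by
      rw [Finset.sum_sub_distrib, Finset.sum_add_distrib, hJ, hJstar, hlu]; ring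
    rw [expand]
    refine Finset.sum_eq_zero fun t _ => ?_
    rw [hσnorm t, conj_deriv hN (norm_nonneg _)]
    ring
  refine ⟨hpart1, hpart2, ?_, ?_⟩
  · intro v
    have hterm : 0 ≤ ∑ t, (μ t * φ ‖G v t‖ + μ t * conj φ ‖σ t‖
        - μ t * (inner ℝ (σ t) (G v t) : ℝ)) := by
      refine Finset.sum_nonneg fun t _ => ?_
      have h1 := mem_conj_le hN (norm_nonneg (σ t)) (norm_nonneg (G v t))
      have h2 := real_inner_le_norm (σ t) (G v t)
      have h3 : (inner ℝ (σ t) (G v t) : ℝ) ≤ φ ‖G v t‖ + conj φ ‖σ t‖ := by linarith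
      nlinarith [mul_le_mul_of_nonneg_left h3 (hμ t).le]
    have expand : J v + Jstar σ = ∑ t, (μ t * φ ‖G v t‖ + μ t * conj φ ‖σ t‖
        - μ t * (inner ℝ (σ t) (G v t) : ℝ)) := by
      rw [Finset.sum_sub_distrib, Finset.sum_add_distrib, hJ, hJstar, ← hpart1 v]; ring
    linarith
  · intro τ hτ
    have hterm : 0 ≤ ∑ t, (μ t * φ ‖G u t‖ + μ t * conj φ ‖τ t‖
        - μ t * (inner ℝ (τ t) (G u t) : ℝ)) := by
      refine Finset.sum_nonneg fun t _ => ?_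
      have h1 := mem_conj_le hN (norm_nonneg (τ t)) (norm_nonneg (G u t))
      have h2 := real_inner_le_norm (τ t) (G u t)
      have h3 : (inner ℝ (τ t) (G u t) : ℝ) ≤ φ ‖G u t‖ + conj φ ‖τ t‖ := by linarith
      nlinarith [mul_le_mul_of_nonneg_left h3 (hμ t).le]
    have expand : J u + Jstar τ = ∑ t, (μ t * φ ‖G u t‖ + μ t * conj φ ‖τ t‖
        - μ t * (inner ℝ (τ t) (G u t) : ℝ)) := by
      rw [Finset.sum_sub_distrib, Finset.sum_add_distrib, hJ, hJstar, ← hτ u]; ring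
    linarith
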